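/- arXiv:2003.04415 — 2 statements merged into one kernel-verified Lean document; each statement's English description precedes it below -/
import Mathlib

section
/- Let U ⊂ ℝ² be open, bounded, convex with x₀ ∈ U and diameter δ, and let B ∈ C¹(ℝ²). For every s ∈ (0,1), s² ∫_U |B(s(x−x₀)+x₀) − B_av|² dx ≤ 8 δ² ∫_U |∇B|² dx, where B_av = (1/|U|) ∫_U B dy. -/
open MeasureTheory

noncomputable section

lemma sq_integral_le' {α : Type*} [MeasurableSpace α] (μ : Measure α) [IsFiniteMeasure μ]
    {f : α → ℝ} (hf : Integrable f μ) (hf2 : Integrable (fun x => f x ^ 2) μ) :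
    (∫ x, f x ∂μ) ^ 2 ≤ (μ Set.univ).toReal * ∫ x, f x ^ 2 ∂μ := by
  set m := (μ Set.univ).toReal with hm
  set A := ∫ x, f x ∂μ with hA
  have h0 : (0:ℝ) ≤ ∫ x, (m * f x - A) ^ 2 ∂μ := integral_nonneg fun x => sq_nonneg _
  have hexp : ∫ x, (m * f x - A) ^ 2 ∂μ
      = m ^ 2 * ∫ x, f x ^ 2 ∂μ - m * A ^ 2 := by
    have h1 : ∀ x, (m * f x - A) ^ 2
        = m ^ 2 * f x ^ 2 - (2 * m * A) * f x + A ^ 2 := by intro x; ring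
    rw [show (fun x => (m * f x - A) ^ 2)
        = fun x => m ^ 2 * f x ^ 2 - (2 * m * A) * f x + A ^ 2 from funext h1]
    have hi1 : Integrable (fun x => m ^ 2 * f x ^ 2 - (2 * m * A) * f x) μ :=
      (hf2.const_mul _).sub (hf.const_mul _)
    rw [show (fun x => m ^ 2 * f x ^ 2 - (2 * m * A) * f x + A ^ 2)
        = (fun x => (m ^ 2 * f x ^ 2 - (2 * m * A) * f x) + (fun _ : α => A ^ 2) x) from rfl,
      integral_add hi1 (integrable_const _),
      integral_sub (hf2.const_mul _) (hf.const_mul _), MeasureTheory.integral_const_mul,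
      MeasureTheory.integral_const_mul, integral_const, measureReal_def, smul_eq_mul, ← hA, ← hm]
    ring
  rw [hexp] at h0
  have hmnn : 0 ≤ m := ENNReal.toReal_nonneg
  rcases eq_or_lt_of_le hmnn with h | h
  · have hz : μ Set.univ = 0 := by
      rcases (ENNReal.toReal_eq_zero_iff _).mp h.symm with h' | h'
      · exact h'
      · exact absurd h' (measure_ne_top μ _)
    have : μ = 0 := Measure.measure_univ_eq_zero.mp hz
    simp [hA, this]
  · have h2 : m * A ^ 2 ≤ m * (m * ∫ x, f x ^ 2 ∂μ) := by nlinarith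
    exact (mul_le_mul_iff_right₀ h).mp h2

lemma ftc_sq {B : EuclideanSpace ℝ (Fin 2) → ℝ} (hB : ContDiff ℝ 1 B)
    (a b : EuclideanSpace ℝ (Fin 2)) :
    (B b - B a) ^ 2
      ≤ ‖b - a‖ ^ 2 * ∫ t in Set.Ioc (0:ℝ) 1, ‖fderiv ℝ B (a + t • (b - a))‖ ^ 2 := by
  set γ : ℝ → EuclideanSpace ℝ (Fin 2) := fun t => a + t • (b - a) with hγ
  have hγc : Continuous γ := by fun_prop
  have hDc : Continuous fun t => (fderiv ℝ B (γ t)) (b - a) := by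
    exact ((hB.continuous_fderiv one_ne_zero).comp hγc).clm_apply continuous_const
  have hderiv : ∀ t ∈ Set.uIcc (0:ℝ) 1,
      HasDerivAt (fun t => B (γ t)) ((fderiv ℝ B (γ t)) (b - a)) t := by
    intro t _
    have h1 : HasDerivAt γ (b - a) t := by
      have : HasDerivAt (fun t : ℝ => t • (b - a)) ((1:ℝ) • (b - a)) t :=
        (hasDerivAt_id t).smul_const (b - a)
      rw [one_smul] at this; exact this.const_add a
    have h2 : HasFDerivAt B (fderiv ℝ B (γ t)) (γ t) :=
      (hB.differentiable one_ne_zero (γ t)).hasFDerivAt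
    exact h2.comp_hasDerivAt t h1
  have hftc : B b - B a = ∫ t in (0:ℝ)..1, (fderiv ℝ B (γ t)) (b - a) := by
    rw [intervalIntegral.integral_eq_sub_of_hasDerivAt hderiv (hDc.intervalIntegrable 0 1)]
    simp [hγ]
  rw [show (∫ t in (0:ℝ)..1, (fderiv ℝ B (γ t)) (b - a))
      = ∫ t in Set.Ioc (0:ℝ) 1, (fderiv ℝ B (γ t)) (b - a) from
    intervalIntegral.integral_of_le zero_le_one] at hftc
  haveI : IsFiniteMeasure (volume.restrict (Set.Ioc (0:ℝ) 1)) := by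
    constructor; simp [Measure.restrict_apply_univ]
  have hmeas : (volume.restrict (Set.Ioc (0:ℝ) 1)) Set.univ = 1 := by
    simp [Measure.restrict_apply_univ]
  have hint1 : Integrable (fun t => (fderiv ℝ B (γ t)) (b - a))
      (volume.restrict (Set.Ioc (0:ℝ) 1)) :=
    hDc.integrableOn_Ioc
  have hint2 : Integrable (fun t => ((fderiv ℝ B (γ t)) (b - a)) ^ 2)
      (volume.restrict (Set.Ioc (0:ℝ) 1)) :=
    (hDc.pow 2).integrableOn_Ioc
  have hCS := sq_integral_le' (volume.restrict (Set.Ioc (0:ℝ) 1)) hint1 hint2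
  rw [hmeas] at hCS
  simp only [ENNReal.toReal_one, one_mul] at hCS
  rw [hftc]
  refine hCS.trans ?_
  have hmono : ∫ t in Set.Ioc (0:ℝ) 1, ((fderiv ℝ B (γ t)) (b - a)) ^ 2
      ≤ ∫ t in Set.Ioc (0:ℝ) 1, ‖b - a‖ ^ 2 * ‖fderiv ℝ B (γ t)‖ ^ 2 := by
    refine setIntegral_mono_on hint2 ?_ measurableSet_Ioc ?_
    · have hcm : Continuous fun t => ‖b - a‖ ^ 2 * ‖fderiv ℝ B (γ t)‖ ^ 2 :=
        continuous_const.mul (((hB.continuous_fderiv one_ne_zero).comp hγc).norm.pow 2)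
      exact hcm.integrableOn_Ioc
    · intro t _
      have := (fderiv ℝ B (γ t)).le_opNorm (b - a)
      have h0 : |((fderiv ℝ B (γ t)) (b - a))| ≤ ‖fderiv ℝ B (γ t)‖ * ‖b - a‖ := by
        simpa [Real.norm_eq_abs] using this
      nlinarith [abs_nonneg ((fderiv ℝ B (γ t)) (b - a)), norm_nonneg (fderiv ℝ B (γ t)),
        norm_nonneg (b - a), sq_abs ((fderiv ℝ B (γ t)) (b - a))]
  refine hmono.trans_eq ?_
  rw [← integral_const_mul]

lemma sub_aff {g : EuclideanSpace ℝ (Fin 2) → ℝ} (hg0 : ∀ z, 0 ≤ g z)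
    {U W : Set (EuclideanSpace ℝ (Fin 2))} (hU : MeasurableSet U)
    (hW : IntegrableOn g W volume) {c : ℝ} (hc : 0 < c) (v : EuclideanSpace ℝ (Fin 2))
    (himg : ∀ x ∈ U, c • x + v ∈ W) :
    c ^ 2 * ∫ x in U, g (c • x + v) ≤ ∫ z in W, g z := by
  set f : EuclideanSpace ℝ (Fin 2) → EuclideanSpace ℝ (Fin 2) := fun x => c • x + v with hf
  have hf' : ∀ x ∈ U, HasFDerivWithinAt f
      (c • ContinuousLinearMap.id ℝ (EuclideanSpace ℝ (Fin 2))) U x := by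
    intro x _
    exact (((hasFDerivAt_id x).const_smul c).add_const v).hasFDerivWithinAt
  have hinj : Set.InjOn f U := by
    intro x _ y _ hxy
    have h1 : c • x = c • y := add_right_cancel hxy
    exact smul_right_injective _ (ne_of_gt hc) h1
  have hdet : |(c • ContinuousLinearMap.id ℝ (EuclideanSpace ℝ (Fin 2))).det| = c ^ 2 := by
    have h1 : (c • ContinuousLinearMap.id ℝ (EuclideanSpace ℝ (Fin 2))).det = c ^ 2 := by
      simp [ContinuousLinearMap.det, LinearMap.det_smul, finrank_euclideanSpace_fin]
    rw [h1, abs_of_nonneg (sq_nonneg c)]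
  have heq := integral_image_eq_integral_abs_det_fderiv_smul volume hU hf' hinj g
  simp only [hdet, smul_eq_mul] at heq
  rw [integral_const_mul] at heq
  rw [← heq]
  refine setIntegral_mono_set hW (Filter.Eventually.of_forall hg0) ?_
  exact HasSubset.Subset.eventuallyLE (by rintro z ⟨x, hx, rfl⟩; exact himg x hx)

set_option maxHeartbeats 2000000 in
/-- for `U ⊂ ℝ²` open, bounded, convex, `x₀ ∈ U`, `B ∈ C¹(ℝ²)` and
`s ∈ (0,1)`: `s² ∫_U |B(s(x−x₀)+x₀) − B_av|² dx ≤ 8 δ² ∫_U |∇B|² dx`. -/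
theorem stmt_2 (U : Set (EuclideanSpace ℝ (Fin 2)))
    (hU_open : IsOpen U) (hU_bdd : Bornology.IsBounded U) (hU_conv : Convex ℝ U)
    (x₀ : EuclideanSpace ℝ (Fin 2)) (hx₀ : x₀ ∈ U)
    (B : EuclideanSpace ℝ (Fin 2) → ℝ) (hB : ContDiff ℝ 1 B)
    (s : ℝ) (hs : s ∈ Set.Ioo (0:ℝ) 1) :
    s ^ 2 * ∫ x in U,
        (B (s • (x - x₀) + x₀) - (volume U).toReal⁻¹ * ∫ y in U, B y) ^ 2
      ≤ 8 * Metric.diam U ^ 2 * ∫ x in U, ‖fderiv ℝ B x‖ ^ 2 := by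
  obtain ⟨hs0, hs1⟩ := hs
  -- notation
  set δ := Metric.diam U with hδdef
  set m := (volume U).toReal with hmdef
  set g : EuclideanSpace ℝ (Fin 2) → ℝ := fun z => ‖fderiv ℝ B z‖ ^ 2 with hgdef
  set I := ∫ x in U, g x with hIdef
  set c := m⁻¹ * ∫ y in U, B y with hcdef
  set φ : EuclideanSpace ℝ (Fin 2) → EuclideanSpace ℝ (Fin 2) :=
    fun x => s • (x - x₀) + x₀ with hφdef
  show s ^ 2 * ∫ x in U, (B (φ x) - c) ^ 2 ≤ 8 * δ ^ 2 * I
  -- basic facts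
  have hUm : MeasurableSet U := hU_open.measurableSet
  have hvolU : volume U ≠ ⊤ := hU_bdd.measure_lt_top.ne
  haveI finU : IsFiniteMeasure (volume.restrict U) :=
    ⟨by rw [Measure.restrict_apply_univ]; exact hU_bdd.measure_lt_top⟩
  have hm_pos : 0 < m := ENNReal.toReal_pos (hU_open.measure_pos volume ⟨x₀, hx₀⟩).ne' hvolU
  have hm0 : m ≠ 0 := ne_of_gt hm_pos
  have hUc : IsCompact (closure U) := hU_bdd.isCompact_closure
  have hgc : Continuous g := (hB.continuous_fderiv one_ne_zero).norm.pow 2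
  have hg0 : ∀ z, 0 ≤ g z := fun z => pow_nonneg (norm_nonneg _) 2
  obtain ⟨C, hC⟩ := hUc.exists_bound_of_continuousOn hgc.continuousOn
  have hφc : Continuous φ := by
    have : Continuous fun x : EuclideanSpace ℝ (Fin 2) => s • (x - x₀) + x₀ := by fun_prop
    exact this
  have hφU : ∀ x ∈ U, φ x ∈ U := by
    intro x hx
    have h1 : φ x = s • x + (1 - s) • x₀ := by simp only [hφdef]; module
    rw [h1]; exact hU_conv hx hx₀ hs0.le (by linarith) (by ring)
  have hseg : ∀ x ∈ U, ∀ y ∈ U, ∀ t ∈ Set.Icc (0:ℝ) 1, φ x + t • (y - φ x) ∈ U := by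
    rintro x hx y hy t ⟨ht0, ht1⟩
    have h1 : φ x + t • (y - φ x) = (1 - t) • φ x + t • y := by module
    rw [h1]; exact hU_conv (hφU x hx) hy (by linarith) ht0 (by ring)
  have hδ0 : 0 ≤ δ := Metric.diam_nonneg
  have hBc : Continuous B := hB.continuous
  obtain ⟨CB, hCB⟩ := hUc.exists_bound_of_continuousOn hBc.continuousOn
  have hBint : IntegrableOn B U volume :=
    Measure.integrableOn_of_bounded hvolU hBc.aestronglyMeasurable
      (ae_restrict_of_forall_mem hUm fun z hz => hCB z (subset_closure hz))
  have hgint : IntegrableOn g U volume :=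
    Measure.integrableOn_of_bounded hvolU hgc.aestronglyMeasurable
      (ae_restrict_of_forall_mem hUm fun z hz => hC z (subset_closure hz))
  have hI0 : 0 ≤ I := setIntegral_nonneg hUm fun z _ => hg0 z
  -- finiteness of interval measures
  haveI finT : IsFiniteMeasure (volume.restrict (Set.Ioc (0:ℝ) 1)) :=
    ⟨by rw [Measure.restrict_apply_univ]; exact measure_Ioc_lt_top⟩
  haveI finT1 : IsFiniteMeasure (volume.restrict (Set.Ioc (0:ℝ) (1/2))) :=
    ⟨by rw [Measure.restrict_apply_univ]; exact measure_Ioc_lt_top⟩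
  haveI finT2 : IsFiniteMeasure (volume.restrict (Set.Ioc (1/2:ℝ) 1)) :=
    ⟨by rw [Measure.restrict_apply_univ]; exact measure_Ioc_lt_top⟩
  -- pair integrability for x ∈ U
  have hpair : ∀ x ∈ U, ∀ (a b : ℝ), Set.Ioc a b ⊆ Set.Ioc (0:ℝ) 1 →
      Integrable (fun q : EuclideanSpace ℝ (Fin 2) × ℝ => g (φ x + q.2 • (q.1 - φ x)))
        ((volume.restrict U).prod (volume.restrict (Set.Ioc a b))) := by
    intro x hx a b hsub
    haveI : IsFiniteMeasure (volume.restrict (Set.Ioc a b)) :=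
      ⟨by rw [Measure.restrict_apply_univ]; exact measure_Ioc_lt_top⟩
    refine (integrable_const C).mono' ?_ ?_
    · exact (hgc.comp (continuous_const.add
        (continuous_snd.smul (continuous_fst.sub continuous_const)))).aestronglyMeasurable
    · rw [Measure.prod_restrict]
      refine ae_restrict_of_forall_mem (hUm.prod measurableSet_Ioc) ?_
      rintro ⟨y, t⟩ ⟨hy, ht⟩
      exact hC _ (subset_closure (hseg x hx y hy t (Set.Ioc_subset_Icc_self (hsub ht))))
  -- triple integrability
  have htrip : ∀ (a b : ℝ), Set.Ioc a b ⊆ Set.Ioc (0:ℝ) 1 →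
      Integrable (fun p : EuclideanSpace ℝ (Fin 2) × (EuclideanSpace ℝ (Fin 2) × ℝ) =>
          g (φ p.1 + p.2.2 • (p.2.1 - φ p.1)))
        ((volume.restrict U).prod
          ((volume.restrict U).prod (volume.restrict (Set.Ioc a b)))) := by
    intro a b hsub
    haveI : IsFiniteMeasure (volume.restrict (Set.Ioc a b)) :=
      ⟨by rw [Measure.restrict_apply_univ]; exact measure_Ioc_lt_top⟩
    refine (integrable_const C).mono' ?_ ?_
    · refine (hgc.comp ?_).aestronglyMeasurable
      exact ((hφc.comp continuous_fst).add ((continuous_snd.snd).smul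
        ((continuous_snd.fst).sub (hφc.comp continuous_fst))))
    · rw [Measure.prod_restrict, Measure.prod_restrict]
      refine ae_restrict_of_forall_mem (hUm.prod (hUm.prod measurableSet_Ioc)) ?_
      rintro ⟨x, y, t⟩ ⟨hx, hy, ht⟩
      exact hC _ (subset_closure (hseg x hx y hy t (Set.Ioc_subset_Icc_self (hsub ht))))
  -- iterated integrals
  set K : EuclideanSpace ℝ (Fin 2) → ℝ :=
    fun x => ∫ y in U, ∫ t in Set.Ioc (0:ℝ) 1, g (φ x + t • (y - φ x)) with hKdef
  set K1 : EuclideanSpace ℝ (Fin 2) → ℝ :=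
    fun x => ∫ y in U, ∫ t in Set.Ioc (0:ℝ) (1/2), g (φ x + t • (y - φ x)) with hK1def
  set K2 : EuclideanSpace ℝ (Fin 2) → ℝ :=
    fun x => ∫ y in U, ∫ t in Set.Ioc (1/2:ℝ) 1, g (φ x + t • (y - φ x)) with hK2def
  -- pointwise Poincaré-type bound
  have hP : ∀ x ∈ U, (B (φ x) - c) ^ 2 ≤ m⁻¹ * (δ ^ 2 * K x) := by
    intro x hx
    have hint_f : Integrable (fun y => B (φ x) - B y) (volume.restrict U) :=
      (integrable_const _).sub hBint
    have hint_f2 : Integrable (fun y => (B (φ x) - B y) ^ 2) (volume.restrict U) := by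
      refine (integrable_const ((2 * CB) ^ 2)).mono'
        ((continuous_const.sub hBc).pow 2).aestronglyMeasurable ?_
      refine ae_restrict_of_forall_mem hUm fun y hy => ?_
      have h1 : ‖B (φ x)‖ ≤ CB := hCB _ (subset_closure (hφU x hx))
      have h2 : ‖B y‖ ≤ CB := hCB _ (subset_closure hy)
      have h3 : ‖B (φ x) - B y‖ ≤ 2 * CB := (norm_sub_le _ _).trans (by linarith)
      calc ‖(B (φ x) - B y) ^ 2‖ = ‖B (φ x) - B y‖ ^ 2 := by rw [norm_pow]
        _ ≤ (2 * CB) ^ 2 := by nlinarith [norm_nonneg (B (φ x) - B y)]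
    have havg : B (φ x) - c = m⁻¹ * ∫ y in U, (B (φ x) - B y) := by
      rw [integral_sub (integrable_const _) hBint, integral_const, measureReal_def,
        Measure.restrict_apply_univ, smul_eq_mul, ← hmdef, hcdef]
      field_simp
    have hCS := sq_integral_le' (volume.restrict U) hint_f hint_f2
    rw [Measure.restrict_apply_univ, ← hmdef] at hCS
    have h1 : (B (φ x) - c) ^ 2 ≤ m⁻¹ * ∫ y in U, (B (φ x) - B y) ^ 2 := by
      rw [havg, mul_pow]
      calc m⁻¹ ^ 2 * (∫ y in U, (B (φ x) - B y)) ^ 2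
          ≤ m⁻¹ ^ 2 * (m * ∫ y in U, (B (φ x) - B y) ^ 2) :=
            mul_le_mul_of_nonneg_left hCS (by positivity)
        _ = m⁻¹ * ∫ y in U, (B (φ x) - B y) ^ 2 := by
            rw [pow_two, mul_assoc, ← mul_assoc m⁻¹ m, inv_mul_cancel₀ hm0, one_mul]
    have h2 : ∫ y in U, (B (φ x) - B y) ^ 2 ≤ δ ^ 2 * K x := by
      rw [hKdef]
      simp only
      rw [← integral_const_mul]
      refine setIntegral_mono_on hint_f2
        (((hpair x hx 0 1 subset_rfl).integral_prod_left).const_mul _) hUm ?_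
      intro y hy
      have hQ0 : 0 ≤ ∫ t in Set.Ioc (0:ℝ) 1, g (φ x + t • (y - φ x)) :=
        setIntegral_nonneg measurableSet_Ioc fun t _ => hg0 _
      have hle : ‖y - φ x‖ ≤ δ := by
        rw [← dist_eq_norm]; exact Metric.dist_le_diam_of_mem hU_bdd hy (hφU x hx)
      calc (B (φ x) - B y) ^ 2 = (B y - B (φ x)) ^ 2 := by ring
        _ ≤ ‖y - φ x‖ ^ 2 * ∫ t in Set.Ioc (0:ℝ) 1, ‖fderiv ℝ B (φ x + t • (y - φ x))‖ ^ 2 :=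
            ftc_sq hB (φ x) y
        _ ≤ δ ^ 2 * ∫ t in Set.Ioc (0:ℝ) 1, g (φ x + t • (y - φ x)) :=
            mul_le_mul_of_nonneg_right (by nlinarith [norm_nonneg (y - φ x)]) hQ0
    exact h1.trans (mul_le_mul_of_nonneg_left h2 (inv_nonneg.mpr hm_pos.le))
  have hsub1 : Set.Ioc (0:ℝ) (1/2) ⊆ Set.Ioc (0:ℝ) 1 := Set.Ioc_subset_Ioc_right (by norm_num)
  have hsub2 : Set.Ioc (1/2:ℝ) 1 ⊆ Set.Ioc (0:ℝ) 1 := Set.Ioc_subset_Ioc_left (by norm_num)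
  -- integrability of the iterated integrals
  have intK : Integrable K (volume.restrict U) := by
    refine ((htrip 0 1 subset_rfl).integral_prod_left).congr
      (ae_restrict_of_forall_mem hUm fun x hx => ?_)
    exact (integral_integral (f := fun y t => g (φ x + t • (y - φ x)))
      (hpair x hx 0 1 subset_rfl)).symm
  have intK1 : Integrable K1 (volume.restrict U) := by
    refine ((htrip 0 (1/2) hsub1).integral_prod_left).congr
      (ae_restrict_of_forall_mem hUm fun x hx => ?_)
    exact (integral_integral (f := fun y t => g (φ x + t • (y - φ x)))
      (hpair x hx 0 (1/2) hsub1)).symm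
  have intK2 : Integrable K2 (volume.restrict U) := by
    refine ((htrip (1/2) 1 hsub2).integral_prod_left).congr
      (ae_restrict_of_forall_mem hUm fun x hx => ?_)
    exact (integral_integral (f := fun y t => g (φ x + t • (y - φ x)))
      (hpair x hx (1/2) 1 hsub2)).symm
  -- splitting the t-integral
  have hKsplit : ∀ x ∈ U, K x = K1 x + K2 x := by
    intro x hx
    simp only [hKdef, hK1def, hK2def]
    have hsplit_t : ∀ y, ∫ t in Set.Ioc (0:ℝ) 1, g (φ x + t • (y - φ x))
        = (∫ t in Set.Ioc (0:ℝ) (1/2), g (φ x + t • (y - φ x)))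
          + ∫ t in Set.Ioc (1/2:ℝ) 1, g (φ x + t • (y - φ x)) := by
      intro y
      have hcont : Continuous fun t : ℝ => g (φ x + t • (y - φ x)) :=
        hgc.comp (continuous_const.add (continuous_id.smul continuous_const))
      rw [← Set.Ioc_union_Ioc_eq_Ioc (by norm_num : (0:ℝ) ≤ 1/2) (by norm_num : (1/2:ℝ) ≤ 1)]
      exact setIntegral_union (Set.Ioc_disjoint_Ioc_of_le le_rfl) measurableSet_Ioc
        hcont.integrableOn_Ioc hcont.integrableOn_Ioc
    simp only [hsplit_t]
    exact integral_add ((hpair x hx 0 (1/2) hsub1).integral_prod_left)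
      ((hpair x hx (1/2) 1 hsub2).integral_prod_left)
  -- pointwise bound for K2
  have hK2nn : ∀ x, 0 ≤ K2 x := fun x =>
    setIntegral_nonneg hUm fun y _ => setIntegral_nonneg measurableSet_Ioc fun t _ => hg0 _
  have hK2b : ∀ x ∈ U, K2 x ≤ 2 * I := by
    intro x hx
    have hswap : K2 x = ∫ t in Set.Ioc (1/2:ℝ) 1, ∫ y in U, g (φ x + t • (y - φ x)) := by
      simp only [hK2def]
      exact integral_integral_swap (f := fun y t => g (φ x + t • (y - φ x)))
        (hpair x hx (1/2) 1 hsub2)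
    rw [hswap]
    have hmono : ∫ t in Set.Ioc (1/2:ℝ) 1, ∫ y in U, g (φ x + t • (y - φ x))
        ≤ ∫ _t in Set.Ioc (1/2:ℝ) 1, (4 * I) := by
      refine setIntegral_mono_on ((hpair x hx (1/2) 1 hsub2).integral_prod_right)
        (integrable_const _) measurableSet_Ioc ?_
      rintro t ⟨ht1, ht2⟩
      have ht0 : (0:ℝ) < t := lt_trans (by norm_num) ht1
      have harg : ∀ y : EuclideanSpace ℝ (Fin 2),
          φ x + t • (y - φ x) = t • y + (φ x - t • φ x) := fun y => by module
      have himg : ∀ y ∈ U, t • y + (φ x - t • φ x) ∈ U := fun y hy => by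
        rw [← harg y]; exact hseg x hx y hy t ⟨ht0.le, ht2⟩
      have hsa := sub_aff hg0 hUm hgint ht0 (φ x - t • φ x) himg
      rw [← hIdef] at hsa
      have h14 : (1/4:ℝ) ≤ t ^ 2 := by nlinarith
      have hrw : ∫ y in U, g (φ x + t • (y - φ x))
          = ∫ y in U, g (t • y + (φ x - t • φ x)) :=
        setIntegral_congr_fun hUm fun y _ => by rw [harg y]
      rw [hrw]
      have hint0 : 0 ≤ ∫ y in U, g (t • y + (φ x - t • φ x)) :=
        setIntegral_nonneg hUm fun y _ => hg0 _
      nlinarith [hsa, hint0, h14]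
    refine hmono.trans ?_
    rw [setIntegral_const, measureReal_def, Real.volume_Ioc,
      ENNReal.toReal_ofReal (by norm_num : (0:ℝ) ≤ 1 - 1/2), smul_eq_mul]
    linarith [hI0]
  -- integral of K2 over U
  have hintK2 : ∫ x in U, K2 x ≤ m * (2 * I) := by
    have h := setIntegral_mono_on intK2 (integrable_const (2 * I)) hUm hK2b
    rwa [setIntegral_const, measureReal_def, smul_eq_mul, ← hmdef] at h
  -- main bound for K1 : substitution in x
  have hintK1 : s ^ 2 * ∫ x in U, K1 x ≤ m * (2 * I) := by
    have h1 : ∫ x in U, K1 x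
        = ∫ x in U, ∫ z, g (φ x + z.2 • (z.1 - φ x))
            ∂((volume.restrict U).prod (volume.restrict (Set.Ioc (0:ℝ) (1/2)))) := by
      refine setIntegral_congr_fun hUm fun x hx => ?_
      simp only [hK1def]
      exact integral_integral (f := fun y t => g (φ x + t • (y - φ x)))
        (hpair x hx 0 (1/2) hsub1)
    have h2 : ∫ x in U, ∫ z, g (φ x + z.2 • (z.1 - φ x))
            ∂((volume.restrict U).prod (volume.restrict (Set.Ioc (0:ℝ) (1/2))))
        = ∫ z, (∫ x in U, g (φ x + z.2 • (z.1 - φ x)))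
            ∂((volume.restrict U).prod (volume.restrict (Set.Ioc (0:ℝ) (1/2)))) :=
      integral_integral_swap
        (f := fun x (z : EuclideanSpace ℝ (Fin 2) × ℝ) => g (φ x + z.2 • (z.1 - φ x)))
        (htrip 0 (1/2) hsub1)
    rw [h1, h2, ← integral_const_mul]
    have hintz : Integrable
        (fun z : EuclideanSpace ℝ (Fin 2) × ℝ =>
          s ^ 2 * ∫ x in U, g (φ x + z.2 • (z.1 - φ x)))
        ((volume.restrict U).prod (volume.restrict (Set.Ioc (0:ℝ) (1/2)))) :=
      ((htrip 0 (1/2) hsub1).integral_prod_right).const_mul _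
    have hb : ∀ᵐ z ∂((volume.restrict U).prod (volume.restrict (Set.Ioc (0:ℝ) (1/2)))),
        s ^ 2 * (∫ x in U, g (φ x + z.2 • (z.1 - φ x))) ≤ 4 * I := by
      rw [Measure.prod_restrict]
      refine ae_restrict_of_forall_mem (hUm.prod measurableSet_Ioc) ?_
      rintro ⟨y, t⟩ ⟨hy, ht⟩
      obtain ⟨ht0, ht2⟩ := ht
      dsimp only
      have hc' : 0 < (1 - t) * s := mul_pos (by linarith) hs0
      have harg : ∀ x' : EuclideanSpace ℝ (Fin 2), φ x' + t • (y - φ x')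
          = ((1 - t) * s) • x' + ((1 - t) • (x₀ - s • x₀) + t • y) := by
        intro x'; simp only [hφdef]; module
      have himg : ∀ x' ∈ U,
          ((1 - t) * s) • x' + ((1 - t) • (x₀ - s • x₀) + t • y) ∈ U := fun x' hx' => by
        rw [← harg x']; exact hseg x' hx' y hy t ⟨ht0.le, by linarith⟩
      have hsa := sub_aff hg0 hUm hgint hc' _ himg
      rw [← hIdef] at hsa
      have hrw : ∫ x' in U, g (φ x' + t • (y - φ x'))
          = ∫ x' in U, g (((1 - t) * s) • x' + ((1 - t) • (x₀ - s • x₀) + t • y)) :=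
        setIntegral_congr_fun hUm fun x' _ => by rw [harg x']
      rw [hrw]
      have hint0 : 0 ≤ ∫ x' in U,
          g (((1 - t) * s) • x' + ((1 - t) • (x₀ - s • x₀) + t • y)) :=
        setIntegral_nonneg hUm fun x' _ => hg0 _
      have h14 : (1/4:ℝ) ≤ (1 - t) ^ 2 := by nlinarith
      nlinarith [hsa, hint0, h14, sq_nonneg s, mul_le_mul_of_nonneg_right h14 hint0]
    have hle := integral_mono_ae hintz (integrable_const (4 * I)) hb
    refine hle.trans ?_
    rw [integral_const, measureReal_def, smul_eq_mul]
    have hmeasρ1 : (((volume.restrict U).prod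
        (volume.restrict (Set.Ioc (0:ℝ) (1/2)))) Set.univ).toReal = m * (1/2) := by
      rw [← Set.univ_prod_univ, Measure.prod_prod, Measure.restrict_apply_univ,
        Measure.restrict_apply_univ, Real.volume_Ioc, ENNReal.toReal_mul, ← hmdef,
        ENNReal.toReal_ofReal (by norm_num : (0:ℝ) ≤ 1/2 - 0)]
      norm_num
    rw [hmeasρ1]
    exact le_of_eq (by ring)
  -- integrability of the left-hand-side integrand
  have intBφ : IntegrableOn (fun x => (B (φ x) - c) ^ 2) U volume := by
    refine (integrable_const ((CB + ‖c‖) ^ 2)).mono'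
      (((hBc.comp hφc).sub continuous_const).pow 2).aestronglyMeasurable ?_
    refine ae_restrict_of_forall_mem hUm fun x hx => ?_
    have h1 : ‖B (φ x)‖ ≤ CB := hCB _ (subset_closure (hφU x hx))
    have h3 : ‖B (φ x) - c‖ ≤ CB + ‖c‖ := (norm_sub_le _ _).trans (by linarith)
    calc ‖(B (φ x) - c) ^ 2‖ = ‖B (φ x) - c‖ ^ 2 := by rw [norm_pow]
      _ ≤ (CB + ‖c‖) ^ 2 := by nlinarith [norm_nonneg (B (φ x) - c)]
  have intRHS : Integrable (fun x => m⁻¹ * (δ ^ 2 * K x)) (volume.restrict U) :=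
    ((intK.const_mul (δ ^ 2)).const_mul m⁻¹)
  have hSmono : ∫ x in U, (B (φ x) - c) ^ 2 ≤ ∫ x in U, m⁻¹ * (δ ^ 2 * K x) :=
    setIntegral_mono_on intBφ intRHS hUm hP
  have hKint_eq : ∫ x in U, K x = (∫ x in U, K1 x) + ∫ x in U, K2 x := by
    have h1 : ∫ x in U, K x = ∫ x in U, (K1 x + K2 x) :=
      setIntegral_congr_fun hUm fun x hx => hKsplit x hx
    rw [h1]
    exact integral_add intK1 intK2
  have hs2K2 : s ^ 2 * ∫ x in U, K2 x ≤ m * (2 * I) := by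
    have h0 : 0 ≤ ∫ x in U, K2 x := setIntegral_nonneg hUm fun x _ => hK2nn x
    have hs2le : s ^ 2 ≤ 1 := by nlinarith
    calc s ^ 2 * ∫ x in U, K2 x ≤ 1 * ∫ x in U, K2 x :=
          mul_le_mul_of_nonneg_right hs2le h0
      _ = ∫ x in U, K2 x := one_mul _
      _ ≤ m * (2 * I) := hintK2
  calc s ^ 2 * ∫ x in U, (B (φ x) - c) ^ 2
      ≤ s ^ 2 * ∫ x in U, m⁻¹ * (δ ^ 2 * K x) :=
        mul_le_mul_of_nonneg_left hSmono (sq_nonneg s)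
    _ = m⁻¹ * δ ^ 2 * ((s ^ 2 * ∫ x in U, K1 x) + s ^ 2 * ∫ x in U, K2 x) := by
        rw [show (fun x => m⁻¹ * (δ ^ 2 * K x)) = fun x => (m⁻¹ * δ ^ 2) * K x from
          funext fun x => by ring, integral_const_mul, hKint_eq]
        ring
    _ ≤ m⁻¹ * δ ^ 2 * (m * (2 * I) + m * (2 * I)) :=
        mul_le_mul_of_nonneg_left (add_le_add hintK1 hs2K2) (by positivity)
    _ = (m⁻¹ * m) * (4 * δ ^ 2 * I) := by ring
    _ = 4 * δ ^ 2 * I := by rw [inv_mul_cancel₀ hm0, one_mul]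
    _ ≤ 8 * δ ^ 2 * I := by nlinarith [hδ0, hI0]


end
end

section
/- Let U ⊂ ℝ² be open, bounded, convex, x₀ ∈ U, δ = diam(U), and B ∈ C¹(ℝ²). Then ∫_U ∫_U |B(s(x−x₀)+x₀) − B(y)|² dx dy ≤ (8/s²) δ² |U| ∫_U |∇B|² dx for all s ∈ (0,1). -/
open MeasureTheory

noncomputable section

abbrev E2 := EuclideanSpace ℝ (Fin 2)

lemma contIntegrableOn {f : E2 → ℝ} (hf : Continuous f) {t : Set E2}
    (ht : Bornology.IsBounded t) : IntegrableOn f t :=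
  (hf.continuousOn.integrableOn_compact ht.isCompact_closure).mono_set subset_closure

lemma jensen_sq (h : ℝ → ℝ) (hc : Continuous h) :
    (∫ t in Set.Ioc (0:ℝ) 1, h t) ^ 2 ≤ ∫ t in Set.Ioc (0:ℝ) 1, (h t)^2 := by
  haveI : IsProbabilityMeasure (volume.restrict (Set.Ioc (0:ℝ) 1)) :=
    ⟨by simp [Real.volume_Ioc]⟩
  have h1 : Integrable h (volume.restrict (Set.Ioc (0:ℝ) 1)) := hc.integrableOn_Ioc
  have h2 : Integrable ((fun x : ℝ => x ^ 2) ∘ h) (volume.restrict (Set.Ioc (0:ℝ) 1)) :=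
    ((continuous_pow 2).comp hc).integrableOn_Ioc
  have := (Even.convexOn_pow (even_two) (𝕜 := ℝ)).map_average_le
    (continuous_pow 2).continuousOn isClosed_univ
    (Filter.Eventually.of_forall fun _ => trivial) h1 h2
  simpa [average_eq_integral] using this

lemma ftc_sq_bound (B : E2 → ℝ) (hB : ContDiff ℝ 1 B) (y z : E2) :
    (B z - B y)^2 ≤ ‖z - y‖^2 * ∫ t in Set.Ioc (0:ℝ) 1, ‖fderiv ℝ B (y + t • (z - y))‖^2 := by
  set h : ℝ → ℝ := fun t => fderiv ℝ B (y + t • (z - y)) (z - y) with hh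
  have hline : ∀ t : ℝ, HasDerivAt (fun u : ℝ => y + u • (z - y)) (z - y) t := fun t => by
    simpa using ((hasDerivAt_id t).smul_const (z - y)).const_add y
  have hderiv : ∀ t : ℝ, HasDerivAt (fun u => B (y + u • (z - y))) (h t) t := fun t =>
    ((hB.differentiable one_ne_zero _).hasFDerivAt).comp_hasDerivAt t (hline t)
  have hfc : Continuous (fderiv ℝ B) := hB.continuous_fderiv one_ne_zero
  have hγ : Continuous fun t : ℝ => y + t • (z - y) := by continuity
  have hhc : Continuous h := (hfc.comp hγ).clm_apply continuous_const
  have key : ∫ t in (0:ℝ)..1, h t = B z - B y := by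
    have := intervalIntegral.integral_eq_sub_of_hasDerivAt
      (f := fun u => B (y + u • (z - y))) (fun t _ => hderiv t) (hhc.intervalIntegrable 0 1)
    simpa using this
  have h2 : (B z - B y)^2 = (∫ t in Set.Ioc (0:ℝ) 1, h t)^2 := by
    rw [← key, intervalIntegral.integral_of_le zero_le_one]
  rw [h2]
  calc (∫ t in Set.Ioc (0:ℝ) 1, h t)^2 ≤ ∫ t in Set.Ioc (0:ℝ) 1, (h t)^2 := jensen_sq h hhc
  _ ≤ ∫ t in Set.Ioc (0:ℝ) 1, ‖z - y‖^2 * ‖fderiv ℝ B (y + t • (z - y))‖^2 := by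
      apply integral_mono ((hhc.pow 2).integrableOn_Ioc)
        ((continuous_const.mul ((hfc.comp hγ).norm.pow 2)).integrableOn_Ioc)
      intro t
      have h3 : |h t| ≤ ‖fderiv ℝ B (y + t • (z - y))‖ * ‖z - y‖ := by
        rw [hh]
        simpa [Real.norm_eq_abs] using (fderiv ℝ B (y + t • (z - y))).le_opNorm (z - y)
      calc (h t)^2 = |h t|^2 := (sq_abs _).symm
      _ ≤ (‖fderiv ℝ B (y + t • (z - y))‖ * ‖z - y‖)^2 := by
          apply pow_le_pow_left₀ (abs_nonneg _) h3 2
      _ = ‖z - y‖^2 * ‖fderiv ℝ B (y + t • (z - y))‖^2 := by ring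
  _ = ‖z - y‖^2 * ∫ t in Set.Ioc (0:ℝ) 1, ‖fderiv ℝ B (y + t • (z - y))‖^2 :=
      MeasureTheory.integral_const_mul _ _

lemma cov_bound (φ : E2 → ℝ) (hφ : Continuous φ) (hφ0 : ∀ x, 0 ≤ φ x)
    {U : Set E2} (hUm : MeasurableSet U) (hUb : Bornology.IsBounded U)
    (c : ℝ) (hc : 0 < c) (a : E2) (himg : ∀ x ∈ U, c • x + a ∈ U) :
    ∫ x in U, φ (c • x + a) ≤ (c^2)⁻¹ * ∫ x in U, φ x := by
  have hder : ∀ x ∈ U, HasFDerivWithinAt (fun x : E2 => c • x + a)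
      (c • ContinuousLinearMap.id ℝ E2) U x := fun x _ =>
    (((hasFDerivAt_id x).const_smul c).add_const a).hasFDerivWithinAt
  have hinj : Set.InjOn (fun x : E2 => c • x + a) U := fun u _ v _ h => by
    simp only [add_left_inj] at h
    exact smul_right_injective _ (ne_of_gt hc) h
  have hcov := integral_image_eq_integral_abs_det_fderiv_smul volume hUm hder hinj φ
  have hdet : (c • ContinuousLinearMap.id ℝ E2).det = c ^ 2 := by
    simp [ContinuousLinearMap.det, LinearMap.det_smul, finrank_euclideanSpace_fin]
  rw [hdet] at hcov
  have himle : ∫ x in (fun x : E2 => c • x + a) '' U, φ x ≤ ∫ x in U, φ x := by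
    apply setIntegral_mono_set (contIntegrableOn hφ hUb)
      (Filter.Eventually.of_forall fun x => hφ0 x)
    exact (Set.image_subset_iff.mpr fun x hx => himg x hx).eventuallyLE
  have habs : |c ^ 2| = c ^ 2 := abs_of_pos (by positivity)
  rw [hcov] at himle
  simp only [habs, smul_eq_mul] at himle
  rw [MeasureTheory.integral_const_mul] at himle
  calc ∫ x in U, φ (c • x + a) = (c^2)⁻¹ * (c^2 * ∫ x in U, φ (c • x + a)) := by
        field_simp
  _ ≤ (c^2)⁻¹ * ∫ x in U, φ x := by
        apply mul_le_mul_of_nonneg_left himle (by positivity)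

lemma inner_bound (φ : E2 → ℝ) (hφ : Continuous φ) (hφ0 : ∀ x, 0 ≤ φ x)
    {U : Set E2} (hUm : MeasurableSet U) (hUb : Bornology.IsBounded U)
    (a b : ℝ) (hab : a < b) (c : ℝ → ℝ) (v : ℝ → E2)
    (hcc : Continuous c) (hvc : Continuous v)
    (c0 : ℝ) (hc0 : 0 < c0) (hcl : ∀ t ∈ Set.Ioc a b, c0 ≤ c t)
    (himg : ∀ t ∈ Set.Ioc a b, ∀ x ∈ U, c t • x + v t ∈ U) :
    ∫ x in U, ∫ t in Set.Ioc a b, φ (c t • x + v t)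
      ≤ (b - a) * ((c0^2)⁻¹ * ∫ x in U, φ x) := by
  set K := ∫ x in U, φ x with hK
  have hK0 : 0 ≤ K := setIntegral_nonneg hUm fun x _ => hφ0 x
  obtain ⟨M, hM⟩ := hUb.isCompact_closure.exists_bound_of_continuousOn hφ.continuousOn
  set M₀ := max M 0 with hM₀
  have hGc : Continuous fun p : E2 × ℝ => φ (c p.2 • p.1 + v p.2) :=
    hφ.comp (((hcc.comp continuous_snd).smul continuous_fst).add (hvc.comp continuous_snd))
  have hUfin : volume U < ⊤ := hUb.measure_lt_top
  have hIfin : volume (Set.Ioc a b) < ⊤ := by simp [Real.volume_Ioc]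
  haveI : IsFiniteMeasure (volume.restrict U) := ⟨by rwa [Measure.restrict_apply_univ]⟩
  haveI : IsFiniteMeasure (volume.restrict (Set.Ioc a b)) :=
    ⟨by rwa [Measure.restrict_apply_univ]⟩
  have hint : Integrable (fun p : E2 × ℝ => φ (c p.2 • p.1 + v p.2))
      ((volume.restrict U).prod (volume.restrict (Set.Ioc a b))) := by
    apply (integrable_const M₀).mono' hGc.aestronglyMeasurable
    rw [Measure.prod_restrict]
    filter_upwards [ae_restrict_mem (hUm.prod measurableSet_Ioc)] with p hp
    have := himg p.2 hp.2 p.1 hp.1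
    calc ‖φ (c p.2 • p.1 + v p.2)‖ ≤ M := hM _ (subset_closure this)
    _ ≤ M₀ := le_max_left _ _
  have hswap := integral_integral_swap (f := fun x t => φ (c t • x + v t)) hint
  rw [hswap]
  have hbnd : ∀ t ∈ Set.Ioc a b, ‖∫ x in U, φ (c t • x + v t)‖ ≤ (c0^2)⁻¹ * K := by
    intro t ht
    have h1 : 0 ≤ ∫ x in U, φ (c t • x + v t) :=
      setIntegral_nonneg hUm fun x _ => hφ0 _
    rw [Real.norm_eq_abs, abs_of_nonneg h1]
    calc ∫ x in U, φ (c t • x + v t)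
        ≤ ((c t)^2)⁻¹ * K := cov_bound φ hφ hφ0 hUm hUb (c t)
          (lt_of_lt_of_le hc0 (hcl t ht)) (v t) (himg t ht)
    _ ≤ (c0^2)⁻¹ * K := by
        apply mul_le_mul_of_nonneg_right _ hK0
        apply inv_anti₀ (by positivity)
        exact pow_le_pow_left₀ hc0.le (hcl t ht) 2
  have := (norm_setIntegral_le_of_norm_le_const (μ := volume) hIfin hbnd :
    _ ≤ (c0^2)⁻¹ * K * (volume (Set.Ioc a b)).toReal)
  rw [measureReal_def] at this
  have h2 : (volume (Set.Ioc a b)).toReal = b - a := by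
    simp [Real.volume_Ioc, ENNReal.toReal_ofReal (by linarith : (0:ℝ) ≤ b - a)]
  rw [h2] at this
  calc ∫ t in Set.Ioc a b, ∫ x in U, φ (c t • x + v t)
      ≤ ‖∫ t in Set.Ioc a b, ∫ x in U, φ (c t • x + v t)‖ := le_abs_self _
  _ ≤ (c0^2)⁻¹ * K * (b - a) := this
  _ = (b - a) * ((c0^2)⁻¹ * K) := by ring

set_option maxHeartbeats 2000000 in
/-- for `U ⊂ ℝ²` open, bounded, convex, `x₀ ∈ U`, `δ = diam U`,
`B ∈ C¹(ℝ²)` and `s ∈ (0,1)`: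
`∫_U ∫_U |B(s(x−x₀)+x₀) − B(y)|² dx dy ≤ (8/s²) δ² |U| ∫_U |∇B|² dx`. -/
theorem stmt_4 (U : Set (EuclideanSpace ℝ (Fin 2)))
    (hU_open : IsOpen U) (hU_bdd : Bornology.IsBounded U) (hU_conv : Convex ℝ U)
    (x₀ : EuclideanSpace ℝ (Fin 2)) (hx₀ : x₀ ∈ U)
    (B : EuclideanSpace ℝ (Fin 2) → ℝ) (hB : ContDiff ℝ 1 B)
    (s : ℝ) (hs : s ∈ Set.Ioo (0:ℝ) 1) :
    ∫ y in U, ∫ x in U, (B (s • (x - x₀) + x₀) - B y) ^ 2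
      ≤ 8 / s ^ 2 * Metric.diam U ^ 2 * (volume U).toReal *
          ∫ x in U, ‖fderiv ℝ B x‖ ^ 2 := by
  obtain ⟨hs0, hs1⟩ := hs
  have hUm : MeasurableSet U := hU_open.measurableSet
  have hUfin : volume U < ⊤ := hU_bdd.measure_lt_top
  haveI : IsFiniteMeasure (volume.restrict U) := ⟨by rwa [Measure.restrict_apply_univ]⟩
  set φ : E2 → ℝ := fun w => ‖fderiv ℝ B w‖^2 with hφdef
  have hφc : Continuous φ := (hB.continuous_fderiv one_ne_zero).norm.pow 2
  have hφ0 : ∀ w, 0 ≤ φ w := fun w => sq_nonneg _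
  set K := ∫ x in U, φ x with hKdef
  have hK0 : 0 ≤ K := setIntegral_nonneg hUm fun x _ => hφ0 x
  set δ := Metric.diam U with hδdef
  have hδ0 : 0 ≤ δ := Metric.diam_nonneg
  set V := (volume U).toReal with hVdef
  have hV0 : 0 ≤ V := ENNReal.toReal_nonneg
  -- the dilated point
  set z : E2 → E2 := fun x => s • (x - x₀) + x₀ with hzdef
  have hzc : Continuous z := by fun_prop
  have hzU : ∀ x ∈ U, z x ∈ U := by
    intro x hx
    have h1 : z x = s • x + (1 - s) • x₀ := by simp only [hzdef]; module
    rw [h1]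
    exact hU_conv hx hx₀ hs0.le (by linarith) (by ring)
  have hzrw : ∀ x : E2, s • (x - x₀) + x₀ = z x := fun _ => rfl
  have hmem : ∀ t ∈ Set.Icc (0:ℝ) 1, ∀ x ∈ U, ∀ y ∈ U, y + t • (z x - y) ∈ U := by
    intro t ht x hx y hy
    have h1 : y + t • (z x - y) = (1 - t) • y + t • z x := by module
    rw [h1]
    exact hU_conv hy (hzU x hx) (by linarith [ht.2]) ht.1 (by ring)
  -- bound for φ on U
  obtain ⟨M, hM⟩ := hU_bdd.isCompact_closure.exists_bound_of_continuousOn hφc.continuousOn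
  set M₀ := max M 0 with hM₀def
  have hM₀0 : 0 ≤ M₀ := le_max_right _ _
  have hφle : ∀ w ∈ U, φ w ≤ M₀ := by
    intro w hw
    have := hM w (subset_closure hw)
    rw [Real.norm_eq_abs, abs_of_nonneg (hφ0 w)] at this
    exact this.trans (le_max_left _ _)
  -- the three inner integrals
  set G : E2 × E2 → ℝ := fun p => ∫ t in Set.Ioc (0:ℝ) 1, φ (p.1 + t • (z p.2 - p.1))
    with hGdef
  set G₁ : E2 × E2 → ℝ := fun p => ∫ t in Set.Ioc (0:ℝ) (1/2), φ (p.1 + t • (z p.2 - p.1))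
    with hG₁def
  set G₂ : E2 × E2 → ℝ := fun p => ∫ t in Set.Ioc (1/2:ℝ) 1, φ (p.1 + t • (z p.2 - p.1))
    with hG₂def
  have hgc : Continuous fun q : (E2 × E2) × ℝ => φ (q.1.1 + q.2 • (z q.1.2 - q.1.1)) := by
    fun_prop
  have hGsm : StronglyMeasurable G := hgc.stronglyMeasurable.integral_prod_right'
  have hG₁sm : StronglyMeasurable G₁ := hgc.stronglyMeasurable.integral_prod_right'
  have hG₂sm : StronglyMeasurable G₂ := hgc.stronglyMeasurable.integral_prod_right'
  -- nonnegativity and bounds of G's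
  have hG0 : ∀ p, 0 ≤ G p := fun p => setIntegral_nonneg measurableSet_Ioc fun t _ => hφ0 _
  have hG₁0 : ∀ p, 0 ≤ G₁ p := fun p => setIntegral_nonneg measurableSet_Ioc fun t _ => hφ0 _
  have hG₂0 : ∀ p, 0 ≤ G₂ p := fun p => setIntegral_nonneg measurableSet_Ioc fun t _ => hφ0 _
  have hGbnd : ∀ (a b : ℝ), 0 ≤ a → a < b → b ≤ 1 → ∀ p ∈ U ×ˢ U,
      ‖∫ t in Set.Ioc a b, φ (p.1 + t • (z p.2 - p.1))‖ ≤ M₀ := by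
    intro a b ha hab hb1 p hp
    have h1 : ∀ t ∈ Set.Ioc a b, ‖φ (p.1 + t • (z p.2 - p.1))‖ ≤ M₀ := by
      intro t ht
      rw [Real.norm_eq_abs, abs_of_nonneg (hφ0 _)]
      exact hφle _ (hmem t ⟨ha.trans ht.1.le, ht.2.trans hb1⟩ p.2 hp.2 p.1 hp.1)
    have h2 := (norm_setIntegral_le_of_norm_le_const (μ := volume)
      (by simp [Real.volume_Ioc] : volume (Set.Ioc a b) < ⊤) h1 : _ ≤ M₀ * (volume (Set.Ioc a b)).toReal)
    rw [measureReal_def] at h2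
    refine h2.trans ?_
    have h3 : (volume (Set.Ioc a b)).toReal = b - a := by
      simp [Real.volume_Ioc, ENNReal.toReal_ofReal (by linarith : (0:ℝ) ≤ b - a)]
    rw [h3]
    nlinarith
  have hGb : ∀ p ∈ U ×ˢ U, ‖G p‖ ≤ M₀ := by
    intro p hp; simp only [hGdef]; exact hGbnd 0 1 le_rfl one_pos le_rfl p hp
  have hG₁b : ∀ p ∈ U ×ˢ U, ‖G₁ p‖ ≤ M₀ := by
    intro p hp; simp only [hG₁def]
    exact hGbnd 0 (1/2) le_rfl (by norm_num) (by norm_num) p hp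
  have hG₂b : ∀ p ∈ U ×ˢ U, ‖G₂ p‖ ≤ M₀ := by
    intro p hp; simp only [hG₂def]
    exact hGbnd (1/2) 1 (by norm_num) (by norm_num) le_rfl p hp
  -- integrability of slices
  have hslice : ∀ (H : E2 × E2 → ℝ), StronglyMeasurable H → (∀ p ∈ U ×ˢ U, ‖H p‖ ≤ M₀) →
      ∀ y ∈ U, IntegrableOn (fun x => H (y, x)) U := by
    intro H hHsm hHb y hy
    apply Integrable.mono' (integrable_const M₀)
      ((hHsm.comp_measurable (measurable_const.prodMk measurable_id)).aestronglyMeasurable)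
    filter_upwards [ae_restrict_mem hUm] with x hx
    exact hHb (y, x) ⟨hy, hx⟩
  have hFi : ∀ (H : E2 × E2 → ℝ), StronglyMeasurable H → (∀ p ∈ U ×ˢ U, ‖H p‖ ≤ M₀) →
      IntegrableOn (fun y => ∫ x in U, H (y, x)) U := by
    intro H hHsm hHb
    apply Integrable.mono' (integrable_const (M₀ * V))
      hHsm.integral_prod_right'.aestronglyMeasurable
    filter_upwards [ae_restrict_mem hUm] with y hy
    exact norm_setIntegral_le_of_norm_le_const hUfin fun x hx => hHb (y, x) ⟨hy, hx⟩
  -- step A : pointwise in y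
  have stepA : ∀ y ∈ U, (∫ x in U, (B (z x) - B y)^2) ≤ δ^2 * ∫ x in U, G (y, x) := by
    intro y hy
    rw [← MeasureTheory.integral_const_mul]
    apply setIntegral_mono_on
    · exact contIntegrableOn (((hB.continuous.comp hzc).sub continuous_const).pow 2) hU_bdd
    · exact (hslice G hGsm hGb y hy).const_mul _
    · exact hUm
    · intro x hx
      have h1 := ftc_sq_bound B hB y (z x)
      have h2 : ‖z x - y‖ ≤ δ := by
        rw [← dist_eq_norm]
        exact Metric.dist_le_diam_of_mem hU_bdd (hzU x hx) hy
      refine h1.trans ?_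
      have h3 : (∫ t in Set.Ioc (0:ℝ) 1, ‖fderiv ℝ B (y + t • (z x - y))‖^2) = G (y, x) := by
        simp only [hGdef]
        rfl
      rw [h3]
      exact mul_le_mul_of_nonneg_right (pow_le_pow_left₀ (norm_nonneg _) h2 2) (hG0 (y, x))
  -- splitting the t-integral
  have hsplit : ∀ p : E2 × E2, G p = G₁ p + G₂ p := by
    intro p
    simp only [hGdef, hG₁def, hG₂def]
    rw [← Set.Ioc_union_Ioc_eq_Ioc (by norm_num : (0:ℝ) ≤ 1/2) (by norm_num : (1/2:ℝ) ≤ 1)]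
    exact setIntegral_union (Set.Ioc_disjoint_Ioc_of_le le_rfl) measurableSet_Ioc
      ((hφc.comp (by fun_prop) : Continuous fun t : ℝ =>
        φ (p.1 + t • (z p.2 - p.1))).integrableOn_Ioc)
      ((hφc.comp (by fun_prop) : Continuous fun t : ℝ =>
        φ (p.1 + t • (z p.2 - p.1))).integrableOn_Ioc)
  -- main inequality step 1
  have main1 : (∫ y in U, ∫ x in U, (B (z x) - B y)^2)
      ≤ ∫ y in U, δ^2 * ∫ x in U, G (y, x) := by
    apply setIntegral_mono_on _ ((hFi G hGsm hGb).const_mul _) hUm stepA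
    obtain ⟨MB, hMB⟩ := hU_bdd.isCompact_closure.exists_bound_of_continuousOn
      hB.continuous.continuousOn
    apply Integrable.mono' (integrable_const ((2*MB)^2 * V))
    · exact (((((hB.continuous.comp hzc).comp continuous_snd).sub
        (hB.continuous.comp continuous_fst)).pow 2).stronglyMeasurable.integral_prod_right').aestronglyMeasurable
    · filter_upwards [ae_restrict_mem hUm] with y hy
      apply norm_setIntegral_le_of_norm_le_const hUfin
      intro x hx
      have h1 : |B (z x)| ≤ MB := by
        simpa [Real.norm_eq_abs] using hMB _ (subset_closure (hzU x hx))
      have h2 : |B y| ≤ MB := by simpa [Real.norm_eq_abs] using hMB _ (subset_closure hy)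
      rw [Real.norm_eq_abs, abs_of_nonneg (sq_nonneg _)]
      have h3 := abs_le.mp h1
      have h4 := abs_le.mp h2
      nlinarith [mul_nonneg (by linarith : (0:ℝ) ≤ 2*MB - (B (z x) - B y))
        (by linarith : (0:ℝ) ≤ 2*MB + (B (z x) - B y))]
  -- splitting at the integral level
  have main2 : (∫ y in U, δ^2 * ∫ x in U, G (y, x))
      = δ^2 * ((∫ y in U, ∫ x in U, G₁ (y, x)) + ∫ y in U, ∫ x in U, G₂ (y, x)) := by
    rw [MeasureTheory.integral_const_mul]
    congr 1
    rw [← integral_add (hFi G₁ hG₁sm hG₁b) (hFi G₂ hG₂sm hG₂b)]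
    apply integral_congr_ae
    filter_upwards [ae_restrict_mem hUm] with y hy
    rw [← integral_add (hslice G₁ hG₁sm hG₁b y hy) (hslice G₂ hG₂sm hG₂b y hy)]
    simp only [hsplit]
  -- bound for the second piece
  have hS₂ : (∫ y in U, ∫ x in U, G₂ (y, x)) ≤ ((1:ℝ) - 1/2) * (((s/2)^2)⁻¹ * K) * V := by
    have hb : ∀ y ∈ U, ‖∫ x in U, G₂ (y, x)‖ ≤ ((1:ℝ) - 1/2) * (((s/2)^2)⁻¹ * K) := by
      intro y hy
      rw [Real.norm_eq_abs, abs_of_nonneg (setIntegral_nonneg hUm fun x _ => hG₂0 _)]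
      have hpt : ∀ (x : E2) (t : ℝ),
          y + t • (z x - y) = (t*s) • x + (y + t • ((1-s) • x₀ - y)) := by
        intro x t; simp only [hzdef]; module
      have h1 : (∫ x in U, G₂ (y, x)) = ∫ x in U, ∫ t in Set.Ioc (1/2:ℝ) 1,
          φ ((t*s) • x + (y + t • ((1-s) • x₀ - y))) := by
        simp only [hG₂def, hpt]
      rw [h1]
      apply inner_bound φ hφc hφ0 hUm hU_bdd (1/2) 1 (by norm_num)
        (fun t => t*s) (fun t => y + t • ((1-s) • x₀ - y)) (by fun_prop) (by fun_prop)
        (s/2) (by positivity)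
      · intro t ht; nlinarith [ht.1]
      · intro t ht x hx
        rw [← hpt x t]
        exact hmem t ⟨by linarith [ht.1], ht.2⟩ x hx y hy
    calc (∫ y in U, ∫ x in U, G₂ (y, x)) ≤ ‖∫ y in U, ∫ x in U, G₂ (y, x)‖ := le_abs_self _
    _ ≤ ((1:ℝ) - 1/2) * (((s/2)^2)⁻¹ * K) * V :=
        norm_setIntegral_le_of_norm_le_const hUfin hb
  -- bound for the first piece (needs swapping y and x)
  have hS₁ : (∫ y in U, ∫ x in U, G₁ (y, x)) ≤ ((1:ℝ)/2 - 0) * ((((1:ℝ)/2)^2)⁻¹ * K) * V := by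
    have hintp : Integrable (Function.uncurry fun y x => G₁ (y, x))
        ((volume.restrict U).prod (volume.restrict U)) := by
      apply (integrable_const M₀).mono' hG₁sm.aestronglyMeasurable
      rw [Measure.prod_restrict]
      filter_upwards [ae_restrict_mem (hUm.prod hUm)] with p hp using hG₁b p hp
    rw [integral_integral_swap hintp]
    have hb : ∀ x ∈ U, ‖∫ y in U, G₁ (y, x)‖ ≤ ((1:ℝ)/2 - 0) * ((((1:ℝ)/2)^2)⁻¹ * K) := by
      intro x hx
      rw [Real.norm_eq_abs, abs_of_nonneg (setIntegral_nonneg hUm fun y _ => hG₁0 _)]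
      have hpt : ∀ (y : E2) (t : ℝ), y + t • (z x - y) = (1-t) • y + t • z x := by
        intro y t; module
      have h1 : (∫ y in U, G₁ (y, x)) = ∫ y in U, ∫ t in Set.Ioc (0:ℝ) (1/2),
          φ ((1-t) • y + t • z x) := by
        simp only [hG₁def, hpt]
      rw [h1]
      apply inner_bound φ hφc hφ0 hUm hU_bdd 0 (1/2) (by norm_num)
        (fun t => 1-t) (fun t => t • z x) (by fun_prop) (by fun_prop)
        (1/2) (by norm_num)
      · intro t ht; simp only [Set.mem_Ioc] at ht; linarith [ht.2]
      · intro t ht y hy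
        rw [← hpt y t]
        exact hmem t ⟨ht.1.le, by linarith [ht.2]⟩ x hx y hy
    calc (∫ x in U, ∫ y in U, G₁ (y, x)) ≤ ‖∫ x in U, ∫ y in U, G₁ (y, x)‖ := le_abs_self _
    _ ≤ ((1:ℝ)/2 - 0) * ((((1:ℝ)/2)^2)⁻¹ * K) * V :=
        norm_setIntegral_le_of_norm_le_const hUfin hb
  -- put everything together
  have hgoal : ∫ y in U, ∫ x in U, (B (z x) - B y)^2 ≤ 8 / s^2 * δ^2 * V * K := by
    have hs2 : (0:ℝ) < s^2 := by positivity
    have hs21 : s^2 ≤ 1 := by nlinarith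
    have hu : 1 ≤ (s^2)⁻¹ := by simpa using inv_anti₀ hs2 hs21
    have hinv : ((s/2)^2)⁻¹ = 4 * (s^2)⁻¹ := by
      rw [div_pow, inv_div]
      norm_num
      rw [div_eq_mul_inv]
    calc ∫ y in U, ∫ x in U, (B (z x) - B y)^2
        ≤ ∫ y in U, δ^2 * ∫ x in U, G (y, x) := main1
    _ = δ^2 * ((∫ y in U, ∫ x in U, G₁ (y, x)) + ∫ y in U, ∫ x in U, G₂ (y, x)) := main2
    _ ≤ δ^2 * (((1:ℝ)/2 - 0) * ((((1:ℝ)/2)^2)⁻¹ * K) * V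
          + ((1:ℝ) - 1/2) * (((s/2)^2)⁻¹ * K) * V) :=
        mul_le_mul_of_nonneg_left (add_le_add hS₁ hS₂) (sq_nonneg δ)
    _ ≤ 8 / s^2 * δ^2 * V * K := by
        rw [hinv, show (8:ℝ) / s^2 = 8 * (s^2)⁻¹ from div_eq_mul_inv _ _,
          show (((1:ℝ)/2)^2)⁻¹ = 4 by norm_num]
        have h0 : (0:ℝ) ≤ δ^2 * V * K := by positivity
        nlinarith [mul_nonneg (by linarith : (0:ℝ) ≤ 6*(s^2)⁻¹ - 2) h0]
  calc ∫ y in U, ∫ x in U, (B (s • (x - x₀) + x₀) - B y) ^ 2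
      = ∫ y in U, ∫ x in U, (B (z x) - B y)^2 := by simp only [hzrw]
  _ ≤ 8 / s^2 * δ^2 * V * K := hgoal

end
end
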